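/- Consider a generating tree defined by an ECO-system with axiom (s0) and rules (k) ↝ (e1(k))...(ek(k)), where each node labeled k has k children with labels e_i(k) ≥ 1. If σ(k) := e1(k)+...+ek(k) = αk + β is an affine function of k, then the sequence f_n counting nodes at level n satisfies f_{n+2} = α f_{n+1} + β f_n with f_0 = 1, f_1 = s0; equivalently the generating function is F(z) = (1 + (s0 - α)z)/(1 - αz - βz²). -/

import Mathlib

open PowerSeries

/-- for an ECO-system whose production sums are affine, σ(k) = αk + β,
the level counting sequence satisfies f_{n+2} = α f_{n+1} + β f_n with f_0 = 1, f_1 = s0;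
equivalently (1 - αz - βz²) F(z) = 1 + (s0 - α) z. -/
theorem stmt_0 (s0 : ℕ) (hs0 : 1 ≤ s0) (e : ℕ → List ℕ) (α β : ℤ)
    (hlen : ∀ k, 1 ≤ k → (e k).length = k)
    (hpos : ∀ k, 1 ≤ k → ∀ l ∈ e k, 1 ≤ l)
    (hsum : ∀ k, 1 ≤ k → ((e k).sum : ℤ) = α * k + β)
    (levels : ℕ → Multiset ℕ)
    (hlev0 : levels 0 = {s0})
    (hlev : ∀ n, levels (n + 1) = (levels n).bind (fun k => (e k : Multiset ℕ)))
    (f : ℕ → ℕ) (hf : ∀ n, f n = Multiset.card (levels n)) :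
    (f 0 = 1 ∧ f 1 = s0 ∧ ∀ n, (f (n + 2) : ℤ) = α * f (n + 1) + β * f n) ∧
    (1 - C (α : ℚ) * X - C (β : ℚ) * X ^ 2) * mk (fun n => (f n : ℚ))
      = 1 + C ((s0 : ℚ) - (α : ℚ)) * X := by
  -- all labels are positive
  have hposlev : ∀ n, ∀ l ∈ levels n, 1 ≤ l := by
    intro n
    induction n with
    | zero => intro l hl; rw [hlev0, Multiset.mem_singleton] at hl; omega
    | succ m ih =>
      intro l hl
      rw [hlev, Multiset.mem_bind] at hl
      obtain ⟨k, hk, hlk⟩ := hl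
      exact hpos k (ih k hk) l (by simpa using hlk)
  -- card of next level = sum of labels
  have hcard : ∀ n, Multiset.card (levels (n + 1)) = (levels n).sum := by
    intro n
    rw [hlev, Multiset.card_bind]
    calc (Multiset.map (fun k => Multiset.card (e k : Multiset ℕ)) (levels n)).sum
        = (Multiset.map (fun k : ℕ => k) (levels n)).sum := by
          exact congrArg Multiset.sum (Multiset.map_congr rfl (fun k hk => by
            simpa using hlen k (hposlev n k hk)))
      _ = (levels n).sum := by simp
  -- sum of next level
  have hsumlev : ∀ n, (((levels (n + 1)).sum : ℕ) : ℤ)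
      = α * ((levels n).sum : ℤ) + β * (Multiset.card (levels n) : ℤ) := by
    intro n
    rw [hlev, Multiset.sum_bind]
    have h1 : ((Multiset.map (fun k => ((e k : Multiset ℕ)).sum) (levels n)).sum : ℤ)
        = (Multiset.map (fun k : ℕ => α * (k : ℤ) + β) (levels n)).sum := by
      rw [Nat.cast_multiset_sum, Multiset.map_map]
      exact congrArg Multiset.sum (Multiset.map_congr rfl (fun k hk => by
        simpa using hsum k (hposlev n k hk)))
    rw [h1, Multiset.sum_map_add]
    congr 1
    · rw [Multiset.sum_map_mul_left, Nat.cast_multiset_sum]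
    · simp [mul_comm]
  -- the recurrence
  have hf0 : f 0 = 1 := by rw [hf, hlev0]; rfl
  have hf1 : f 1 = s0 := by rw [hf, hcard, hlev0]; simp
  have hrec : ∀ n, (f (n + 2) : ℤ) = α * f (n + 1) + β * f n := by
    intro n
    rw [hf (n + 2), hf (n + 1), hf n, hcard (n + 1), hcard n, hsumlev]
  refine ⟨⟨hf0, hf1, hrec⟩, ?_⟩
  have hrecQ : ∀ n, (f (n + 2) : ℚ) = α * f (n + 1) + β * f n := by
    intro n
    exact_mod_cast congrArg (fun z : ℤ => (z : ℚ)) (hrec n)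
  set g : ℕ → ℚ := fun n => (f n : ℚ) with hg
  have expand : (1 - C (α : ℚ) * X - C (β : ℚ) * X ^ 2) * mk g
      = mk g - C (α : ℚ) * (X * mk g) - C (β : ℚ) * (X * (X * mk g)) := by ring
  rw [expand]
  ext n
  match n with
  | 0 =>
    simp [coeff_mk, hg, hf0]
  | 1 =>
    rw [show (1:ℕ) = 0 + 1 from rfl]
    simp only [map_sub, coeff_C_mul, coeff_succ_X_mul, coeff_mk]
    simp [constantCoeff_X, coeff_one, coeff_X, hg, hf0, hf1]
  | (n + 2) =>
    have hL : (coeff (n+2)) ((mk g) - C (α:ℚ) * (X * mk g)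
        - C (β:ℚ) * (X * (X * mk g))) = g (n+2) - (α:ℚ) * g (n+1) - (β:ℚ) * g n := by
      simp only [map_sub, coeff_C_mul, coeff_succ_X_mul, coeff_mk]
    have hR : (coeff (n+2)) (1 + C ((s0:ℚ) - (α:ℚ)) * X) = 0 := by
      rw [map_add, coeff_C_mul, coeff_X, if_neg (by omega), coeff_one, if_neg (by omega)]
      ring
    rw [hL, hR, hg]
    simp only []
    rw [hrecQ n]
    ring
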